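/- Let n ≥ 1, p ≥ 1, s* ∈ {2,…,⌊p/e⌋} and M := ⌊log₂(s*)⌋. The function w(b) := √((b/n)·log(p/b)) satisfies Assumption 1: (i) w is increasing on the real interval [1, s*]; (ii) there exists a constant C' > 0 (independent of n, p, s*) such that Σ_{k=1}^m w(2^k) ≤ C'·w(2^m) for all m ∈ {1,…,M}; (iii) w(2b) ≤ √2·w(b) for all integers b ∈ {1,…,s*}. -/

import Mathlib

noncomputable section

/-- The weight function `w(b) = √((b/n)·log(p/b))`. -/
def wPred (n p : ℕ) (b : ℝ) : ℝ := Real.sqrt ((b / n) * Real.log (p / b))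

/-- Lemma 1 for `w(b) = √((b/n)·log(p/b))`: it satisfies Assumption 1. -/
theorem assumption_w_prediction_weight :
    ∃ C' : ℝ, 0 < C' ∧
    ∀ (n p sstar : ℕ), 1 ≤ n → 1 ≤ p → 2 ≤ sstar → (sstar : ℝ) * Real.exp 1 ≤ p →
    MonotoneOn (wPred n p) (Set.Icc (1 : ℝ) (sstar : ℝ)) ∧
    (∀ m : ℕ, 1 ≤ m → m ≤ Nat.log 2 sstar →
      ∑ k ∈ Finset.Icc 1 m, wPred n p ((2 : ℝ) ^ k) ≤ C' * wPred n p ((2 : ℝ) ^ m)) ∧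
    (∀ b : ℕ, 1 ≤ b → b ≤ sstar →
      wPred n p (2 * (b : ℝ)) ≤ Real.sqrt 2 * wPred n p (b : ℝ)) := by
  refine ⟨13, by norm_num, ?_⟩
  intro n p sstar hn hp hs hsp
  have hn0 : (0:ℝ) < n := by exact_mod_cast hn
  have hp0 : (0:ℝ) < p := by exact_mod_cast hp
  have hs0 : (2:ℝ) ≤ (sstar:ℝ) := by exact_mod_cast hs
  refine ⟨?_, ?_, ?_⟩
  · -- monotonicity
    have hg : MonotoneOn (fun x : ℝ => x * (Real.log p - Real.log x))
        (Set.Icc (1:ℝ) (sstar:ℝ)) := by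
      apply monotoneOn_of_deriv_nonneg (convex_Icc _ _)
      · apply continuousOn_id.mul
        apply continuousOn_const.sub
        apply Real.continuousOn_log.mono
        intro x hx
        simp only [Set.mem_compl_iff, Set.mem_singleton_iff]
        have := hx.1
        intro h; rw [h] at this; linarith
      · rw [interior_Icc]
        intro x hx
        have hx0 : (0:ℝ) < x := by have := hx.1; linarith
        exact ((differentiable_id.differentiableAt).mul
          ((differentiableAt_const _).sub (Real.differentiableAt_log hx0.ne'))).differentiableWithinAt
      · rw [interior_Icc]
        intro x hx
        have hx0 : (0:ℝ) < x := by have := hx.1; linarith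
        have hderiv : HasDerivAt (fun x : ℝ => x * (Real.log p - Real.log x))
            (1 * (Real.log p - Real.log x) + x * (0 - x⁻¹)) x :=
          (hasDerivAt_id x).mul ((hasDerivAt_const x (Real.log p)).sub (Real.hasDerivAt_log hx0.ne'))
        rw [hderiv.deriv]
        have hxp : Real.exp 1 * x ≤ p := by
          have h1 : Real.exp 1 * x ≤ Real.exp 1 * sstar := by
            have := hx.2
            nlinarith [Real.exp_pos 1]
          nlinarith [hsp]
        have hlog : Real.log (Real.exp 1 * x) ≤ Real.log p :=
          Real.log_le_log (by positivity) hxp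
        rw [Real.log_mul (Real.exp_pos 1).ne' hx0.ne', Real.log_exp] at hlog
        have hxx : x * x⁻¹ = 1 := by field_simp
        nlinarith [hlog, hxx]
    intro x hx y hy hxy
    unfold wPred
    apply Real.sqrt_le_sqrt
    have key : ∀ z ∈ Set.Icc (1:ℝ) (sstar:ℝ),
        (z / n) * Real.log ((p:ℝ) / z) = (z * (Real.log p - Real.log z)) / n := by
      intro z hz
      have hz0 : (0:ℝ) < z := by have := hz.1; linarith
      rw [Real.log_div hp0.ne' hz0.ne']
      ring
    rw [key x hx, key y hy]
    exact (div_le_div_iff_of_pos_right hn0).mpr (hg hx hy hxy)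
  · -- sum bound
    intro m hm hmM
    have hlog2 : 0 < Real.log 2 := Real.log_pos (by norm_num)
    set r : ℝ := Real.sqrt ((1 + Real.log 2)/2) with hrdef
    have hr2 : r^2 = (1 + Real.log 2)/2 := Real.sq_sqrt (by positivity)
    have hrpos : 0 ≤ r := Real.sqrt_nonneg _
    have hrlt : r < 0.921 := by
      rw [hrdef, show (0.921:ℝ) = Real.sqrt (0.921^2) from (Real.sqrt_sq (by norm_num)).symm]
      apply Real.sqrt_lt_sqrt (by positivity)
      nlinarith [Real.log_two_lt_d9]
    -- step inequality
    have hstep : ∀ k : ℕ, 1 ≤ k → k + 1 ≤ m →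
        wPred n p ((2:ℝ)^k) ≤ r * wPred n p ((2:ℝ)^(k+1)) := by
      intro k hk hkm
      have hsub : (2:ℕ)^(k+1) ≤ sstar :=
        le_trans (Nat.pow_le_pow_right (by norm_num) (le_trans hkm hmM))
          (Nat.pow_log_le_self 2 (by omega))
      have hsubR : (2:ℝ)^(k+1) ≤ (sstar:ℝ) := by exact_mod_cast hsub
      have hep : (2:ℝ)^(k+1) * Real.exp 1 ≤ p := by
        have := mul_le_mul_of_nonneg_right hsubR (Real.exp_pos 1).le
        linarith [hsp]
      set L : ℝ := Real.log ((p:ℝ) / 2^(k+1)) with hLdef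
      have hL1 : 1 ≤ L := by
        rw [hLdef, show (1:ℝ) = Real.log (Real.exp 1) from (Real.log_exp 1).symm]
        apply Real.log_le_log (Real.exp_pos 1)
        rw [le_div_iff₀ (by positivity)]
        linarith [hep]
      have hsplit : Real.log ((p:ℝ)/2^k) = L + Real.log 2 := by
        rw [hLdef, ← Real.log_mul (by positivity) (by norm_num)]
        congr 1
        rw [pow_succ]
        field_simp
      have heq : r * Real.sqrt ((2:ℝ)^(k+1)/n * Real.log ((p:ℝ)/2^(k+1)))
          = Real.sqrt (r^2 * ((2:ℝ)^(k+1)/n * Real.log ((p:ℝ)/2^(k+1)))) := by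
        rw [Real.sqrt_mul (sq_nonneg r), Real.sqrt_sq hrpos]
      unfold wPred
      rw [heq]
      apply Real.sqrt_le_sqrt
      rw [hsplit, hr2, ← hLdef, pow_succ]
      have ht : (0:ℝ) ≤ (2:ℝ)^k / n := by positivity
      have hring : (1 + Real.log 2)/2 * ((2:ℝ)^k*2/↑n * L) - (2:ℝ)^k/↑n * (L + Real.log 2)
          = ((2:ℝ)^k/↑n * Real.log 2) * (L - 1) := by ring
      nlinarith [mul_nonneg (mul_nonneg ht hlog2.le) (sub_nonneg.2 hL1), hring]
    -- chain
    have hchain : ∀ j k : ℕ, 1 ≤ k → k + j ≤ m →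
        wPred n p ((2:ℝ)^k) ≤ r^j * wPred n p ((2:ℝ)^(k+j)) := by
      intro j
      induction j with
      | zero => intro k hk hkm; simp
      | succ j ih =>
        intro k hk hkm
        calc wPred n p ((2:ℝ)^k) ≤ r * wPred n p ((2:ℝ)^(k+1)) := hstep k hk (by omega)
          _ ≤ r * (r^j * wPred n p ((2:ℝ)^(k+1+j))) :=
              mul_le_mul_of_nonneg_left (ih (k+1) (by omega) (by omega)) hrpos
          _ = r^(j+1) * wPred n p ((2:ℝ)^(k+(j+1))) := by
              rw [show k + (j+1) = k+1+j by omega, pow_succ]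
              ring
    calc ∑ k ∈ Finset.Icc 1 m, wPred n p ((2:ℝ)^k)
        ≤ ∑ k ∈ Finset.Icc 1 m, r^(m-k) * wPred n p ((2:ℝ)^m) := by
          apply Finset.sum_le_sum
          intro k hk
          simp only [Finset.mem_Icc] at hk
          have := hchain (m-k) k hk.1 (by omega)
          rwa [show k + (m-k) = m by omega] at this
      _ = (∑ k ∈ Finset.Icc 1 m, r^(m-k)) * wPred n p ((2:ℝ)^m) := by
          rw [Finset.sum_mul]
      _ ≤ 13 * wPred n p ((2:ℝ)^m) := by
          apply mul_le_mul_of_nonneg_right _ (Real.sqrt_nonneg _)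
          have h1 : ∑ k ∈ Finset.Icc 1 m, r^(m-k) = ∑ i ∈ Finset.range m, r^i := by
            rw [show Finset.Icc 1 m = Finset.Ico 1 (m+1) by rw [Finset.Ico_add_one_right_eq_Icc],
              Finset.sum_Ico_eq_sum_range]
            rw [show m + 1 - 1 = m by omega]
            rw [← Finset.sum_range_reflect (fun j => r^j) m]
            apply Finset.sum_congr rfl
            intro i hi
            congr 1
            omega
          rw [h1]
          have hS0 : (0:ℝ) ≤ ∑ i ∈ Finset.range m, r^i :=
            Finset.sum_nonneg fun i _ => pow_nonneg hrpos i
          have hgm := geom_sum_mul r m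
          nlinarith [pow_nonneg hrpos m]
  · -- doubling
    intro b hb hbs
    have hb0 : (0:ℝ) < b := by exact_mod_cast hb
    unfold wPred
    rw [show Real.sqrt 2 * Real.sqrt ((b:ℝ)/n * Real.log ((p:ℝ)/b))
        = Real.sqrt (2 * ((b:ℝ)/n * Real.log ((p:ℝ)/b))) from
      (Real.sqrt_mul (by norm_num) _).symm]
    apply Real.sqrt_le_sqrt
    have hlog : Real.log ((p:ℝ)/(2*b)) ≤ Real.log ((p:ℝ)/b) := by
      apply Real.log_le_log (by positivity)
      apply div_le_div_of_nonneg_left hp0.le (by positivity)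
      linarith
    have h2b : (0:ℝ) ≤ 2*(b:ℝ)/n := by positivity
    calc 2*(b:ℝ)/n * Real.log ((p:ℝ)/(2*b)) ≤ 2*(b:ℝ)/n * Real.log ((p:ℝ)/b) :=
          mul_le_mul_of_nonneg_left hlog h2b
      _ = 2 * ((b:ℝ)/n * Real.log ((p:ℝ)/b)) := by ring

end
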